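/- Every P_5-free graph that does not contain K_{ℓ,ℓ} as a subgraph has degeneracy O(ℓ^3); concretely, degeneracy at most (ℓ−1)·(ℓ + ℓ^2 + ℓ^2) + 1 for ℓ ≥ 2. -/

import Mathlib

/-- `G` contains `K_{ℓ,ℓ}` as a (not necessarily induced) subgraph. -/
def ContainsKll {V : Type*} (G : SimpleGraph V) (ℓ : ℕ) : Prop :=
  ∃ A B : Finset V, Disjoint A B ∧ A.card = ℓ ∧ B.card = ℓ ∧
    ∀ a ∈ A, ∀ b ∈ B, G.Adj a b

/-- `G` contains an induced copy of `H`. -/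
def HasInducedCopy {W V : Type*} (H : SimpleGraph W) (G : SimpleGraph V) : Prop :=
  ∃ f : W ↪ V, ∀ a b : W, G.Adj (f a) (f b) ↔ H.Adj a b

/-- `G` is `k`-degenerate: every nonempty induced subgraph has a vertex of
degree at most `k`. -/
def DegeneracyLE {V : Type*} [DecidableEq V] (G : SimpleGraph V)
    [DecidableRel G.Adj] (k : ℕ) : Prop :=
  ∀ S : Finset V, S.Nonempty → ∃ v ∈ S, (S.filter (fun u => G.Adj v u)).card ≤ k

/-- From five vertices forming an induced path, contradict `P₅`-freeness. -/
lemma p5_of {V : Type*} {G : SimpleGraph V}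
    (hP5 : ¬ HasInducedCopy (SimpleGraph.pathGraph 5) G) {y a b c x : V}
    (h1 : G.Adj y a) (h2 : G.Adj a b) (h3 : G.Adj b c) (h4 : G.Adj c x)
    (n1 : ¬ G.Adj y b) (n2 : ¬ G.Adj y c) (n3 : ¬ G.Adj y x)
    (n4 : ¬ G.Adj a c) (n5 : ¬ G.Adj a x) (n6 : ¬ G.Adj b x) : False := by
  have h1s := h1.symm; have h2s := h2.symm; have h3s := h3.symm; have h4s := h4.symm
  have n1s : ¬ G.Adj b y := fun h => n1 h.symm
  have n2s : ¬ G.Adj c y := fun h => n2 h.symm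
  have n3s : ¬ G.Adj x y := fun h => n3 h.symm
  have n4s : ¬ G.Adj c a := fun h => n4 h.symm
  have n5s : ¬ G.Adj x a := fun h => n5 h.symm
  have n6s : ¬ G.Adj x b := fun h => n6 h.symm
  have dya : y ≠ a := h1.ne
  have dyb : y ≠ b := by rintro rfl; exact n2 h3
  have dyc : y ≠ c := by rintro rfl; exact n4 h1.symm
  have dyx : y ≠ x := by rintro rfl; exact n5 h1.symm
  have dab : a ≠ b := h2.ne
  have dac : a ≠ c := by rintro rfl; exact n5 h4
  have dax : a ≠ x := by rintro rfl; exact n6 h2.symm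
  have dbc : b ≠ c := h3.ne
  have dbx : b ≠ x := by rintro rfl; exact n5 h2
  have dcx : c ≠ x := h4.ne
  apply hP5
  have hinj : Function.Injective ![y, a, b, c, x] := by
    intro i j hij
    fin_cases i <;> fin_cases j <;> simp_all
  refine ⟨⟨![y, a, b, c, x], hinj⟩, ?_⟩
  intro i j
  fin_cases i <;> fin_cases j <;>
    simp_all [SimpleGraph.pathGraph_adj, SimpleGraph.irrefl] <;> decide

/-- Key lemma: for an induced path `a-b-c`, one of the two "private
neighbourhoods" of the endpoints has size at most `ℓ - 1`. -/
lemma key {V : Type*} [DecidableEq V] {G : SimpleGraph V} [DecidableRel G.Adj]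
    {ℓ : ℕ} (hℓ : 1 ≤ ℓ)
    (hP5 : ¬ HasInducedCopy (SimpleGraph.pathGraph 5) G) (hK : ¬ ContainsKll G ℓ)
    (S : Finset V) {a b c : V} (hab : G.Adj a b) (hbc : G.Adj b c) (hac : ¬ G.Adj a c) :
    (S.filter (fun w => G.Adj a w ∧ ¬ G.Adj b w ∧ ¬ G.Adj c w)).card ≤ ℓ - 1 ∨
    (S.filter (fun w => G.Adj c w ∧ ¬ G.Adj a w ∧ ¬ G.Adj b w)).card ≤ ℓ - 1 := by
  by_contra hcon
  push_neg at hcon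
  obtain ⟨hA, hX⟩ := hcon
  obtain ⟨A, hAsub, hAcard⟩ := Finset.exists_subset_card_eq
    (show ℓ ≤ (S.filter (fun w => G.Adj a w ∧ ¬ G.Adj b w ∧ ¬ G.Adj c w)).card by omega)
  obtain ⟨B, hBsub, hBcard⟩ := Finset.exists_subset_card_eq
    (show ℓ ≤ (S.filter (fun w => G.Adj c w ∧ ¬ G.Adj a w ∧ ¬ G.Adj b w)).card by omega)
  apply hK
  refine ⟨A, B, ?_, hAcard, hBcard, ?_⟩
  · rw [Finset.disjoint_left]
    intro p hpA hpB
    have h1 := (Finset.mem_filter.1 (hAsub hpA)).2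
    have h2 := (Finset.mem_filter.1 (hBsub hpB)).2
    exact h2.2.1 h1.1
  · intro p hpA q hqB
    have h1 := (Finset.mem_filter.1 (hAsub hpA)).2
    have h2 := (Finset.mem_filter.1 (hBsub hqB)).2
    by_contra hpq
    exact p5_of hP5 h1.1.symm hab hbc h2.1
      (fun h => h1.2.1 h.symm) (fun h => h1.2.2 h.symm) hpq hac h2.2.1 h2.2.2

/-- If `Q` is large, then at most `ℓ - 1` vertices of `C` can each be
non-adjacent to at most `ℓ - 1` vertices of `Q`. -/
lemma dom_bound {V : Type*} [DecidableEq V] {G : SimpleGraph V} [DecidableRel G.Adj]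
    {ℓ : ℕ} (hℓ : 1 ≤ ℓ) (hK : ¬ ContainsKll G ℓ) {v : V} (C : Finset V)
    (hCv : ∀ z ∈ C, G.Adj v z)
    (Q : Finset V) (hQv : ∀ w ∈ Q, ¬ G.Adj v w) (hQ : ℓ ^ 2 ≤ Q.card) :
    (C.filter (fun z => (Q.filter (fun w => ¬ G.Adj z w)).card ≤ ℓ - 1)).card ≤ ℓ - 1 := by
  by_contra hcon
  push_neg at hcon
  obtain ⟨Z, hZsub, hZcard⟩ := Finset.exists_subset_card_eq
    (show ℓ ≤ (C.filter (fun z => (Q.filter (fun w => ¬ G.Adj z w)).card ≤ ℓ - 1)).card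
      by omega)
  classical
  set common := Q.filter (fun w => ∀ z ∈ Z, G.Adj z w) with hcommon
  have hsub : Q \ common ⊆ Z.biUnion (fun z => Q.filter (fun w => ¬ G.Adj z w)) := by
    intro w hw
    rw [Finset.mem_sdiff, hcommon, Finset.mem_filter] at hw
    obtain ⟨hwQ, hw2⟩ := hw
    rw [Finset.mem_biUnion]
    push_neg at hw2
    obtain ⟨z, hz1, hz2⟩ := hw2 hwQ
    exact ⟨z, hz1, Finset.mem_filter.2 ⟨hwQ, hz2⟩⟩
  have hcardsub : (Q \ common).card ≤ ℓ * (ℓ - 1) := by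
    calc (Q \ common).card ≤ ∑ z ∈ Z, (Q.filter (fun w => ¬ G.Adj z w)).card :=
          le_trans (Finset.card_le_card hsub) Finset.card_biUnion_le
      _ ≤ ∑ _z ∈ Z, (ℓ - 1) :=
          Finset.sum_le_sum (fun z hz => (Finset.mem_filter.1 (hZsub hz)).2)
      _ = ℓ * (ℓ - 1) := by rw [Finset.sum_const, hZcard, smul_eq_mul]
  have hcc : common.card ≤ Q.card := Finset.card_le_card (Finset.filter_subset _ _)
  have hsd : (Q \ common).card = Q.card - common.card :=
    Finset.card_sdiff_of_subset (Finset.filter_subset _ _)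
  have harith : ℓ * (ℓ - 1) + ℓ = ℓ ^ 2 := by
    obtain ⟨m, rfl⟩ : ∃ m, ℓ = m + 1 := ⟨ℓ - 1, by omega⟩
    simp [pow_two]; ring
  have hcommoncard : ℓ ≤ common.card := by omega
  obtain ⟨B, hBsub, hBcard⟩ := Finset.exists_subset_card_eq hcommoncard
  apply hK
  refine ⟨Z, B, ?_, hZcard, hBcard, ?_⟩
  · rw [Finset.disjoint_left]
    intro p hpZ hpB
    exact hQv p (Finset.filter_subset _ _ (hBsub hpB))
      (hCv p (Finset.filter_subset _ _ (hZsub hpZ)))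
  · intro p hpZ q hqB
    exact (Finset.mem_filter.1 (hBsub hqB)).2 p hpZ

/-- The step lemma: some vertex of `C` has at most `ℓ²` non-neighbours in `C`. -/
lemma step_lemma {V : Type*} [DecidableEq V] {G : SimpleGraph V} [DecidableRel G.Adj]
    {ℓ : ℕ} (hℓ : 2 ≤ ℓ)
    (hP5 : ¬ HasInducedCopy (SimpleGraph.pathGraph 5) G) (hK : ¬ ContainsKll G ℓ)
    (S : Finset V) {v : V}
    (hmin : ∀ u ∈ S, (S.filter (fun w => G.Adj v w)).card ≤ (S.filter (fun w => G.Adj u w)).card)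
    {C : Finset V} (hCsub : C ⊆ S.filter (fun w => G.Adj v w)) (hCne : C.Nonempty) :
    ∃ u ∈ C, (C.filter (fun z => ¬ G.Adj u z)).card ≤ ℓ ^ 2 := by
  classical
  by_contra hcon
  push_neg at hcon
  set NS : V → Finset V := fun u => S.filter (fun w => G.Adj u w) with hNS
  set Q : V → Finset V := fun u => S.filter (fun w => G.Adj u w ∧ ¬ G.Adj v w ∧ w ≠ v)
    with hQdef
  have hQmem : ∀ u w : V, w ∈ Q u ↔ (w ∈ S ∧ G.Adj u w ∧ ¬ G.Adj v w ∧ w ≠ v) := by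
    intro u w
    simp only [hQdef, Finset.mem_filter]
  have hNSmem : ∀ u w : V, w ∈ NS u ↔ (w ∈ S ∧ G.Adj u w) := by
    intro u w
    simp only [hNS, Finset.mem_filter]
  have hNScard : ∀ u : V, (NS u).card = (S.filter (fun w => G.Adj u w)).card := by
    intro u; simp only [hNS]
  have hCS : ∀ z ∈ C, z ∈ S ∧ G.Adj v z := by
    intro z hz
    have := hCsub hz; rw [Finset.mem_filter] at this; exact this
  have claim1 : ∀ u ∈ C, ℓ ^ 2 ≤ (Q u).card := by
    intro u hu
    by_contra hq
    push_neg at hq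
    have hsplit : NS u ⊆ (NS u ∩ NS v) ∪ (Q u) ∪ {v} := by
      intro w hw
      rw [hNSmem] at hw
      simp only [Finset.mem_union, Finset.mem_inter, Finset.mem_singleton, hQmem, hNSmem]
      by_cases h1 : w = v
      · exact Or.inr h1
      · by_cases h2 : G.Adj v w
        · exact Or.inl (Or.inl ⟨⟨hw.1, hw.2⟩, hw.1, h2⟩)
        · exact Or.inl (Or.inr ⟨hw.1, hw.2, h2, h1⟩)
    have hcard1 : (NS u).card ≤ (NS u ∩ NS v).card + (Q u).card + 1 := by
      calc (NS u).card ≤ ((NS u ∩ NS v) ∪ (Q u) ∪ {v}).card := Finset.card_le_card hsplit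
        _ ≤ ((NS u ∩ NS v) ∪ (Q u)).card + ({v} : Finset V).card := Finset.card_union_le _ _
        _ ≤ (NS u ∩ NS v).card + (Q u).card + 1 := by
            have := Finset.card_union_le (NS u ∩ NS v) (Q u)
            simp only [Finset.card_singleton]
            omega
    have hmin' : (NS v).card ≤ (NS u).card := by
      rw [hNScard, hNScard]; exact hmin u (hCS u hu).1
    have hsd : (C.filter (fun z => ¬ G.Adj u z)) ⊆ NS v \ NS u := by
      intro z hz
      rw [Finset.mem_filter] at hz
      rw [Finset.mem_sdiff]
      refine ⟨?_, ?_⟩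
      · rw [hNSmem]
        have := hCS z hz.1
        exact ⟨this.1, this.2⟩
      · rw [hNSmem]
        tauto
    have h5 : (NS v \ NS u).card + (NS v ∩ NS u).card = (NS v).card :=
      Finset.card_sdiff_add_card_inter _ _
    have h6 : (NS v ∩ NS u).card = (NS u ∩ NS v).card := by rw [Finset.inter_comm]
    have h7 := Finset.card_le_card hsd
    have h8 := hcon u hu
    omega
  set Dom : V → Finset V :=
    fun u => C.filter (fun z => ((Q u).filter (fun w => ¬ G.Adj z w)).card ≤ ℓ - 1) with hDom
  have hDomSub : ∀ u, Dom u ⊆ C := by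
    intro u; rw [hDom]; exact Finset.filter_subset _ _
  have claim2 : ∀ u ∈ C, (Dom u).card ≤ ℓ - 1 := by
    intro u hu
    rw [hDom]
    exact dom_bound (by omega) hK C (fun z hz => (hCS z hz).2) (Q u)
      (fun w hw => ((hQmem u w).1 hw).2.2.1) (claim1 u hu)
  have claim3 : ∀ u ∈ C, ∀ z ∈ C, ¬ G.Adj u z → u ≠ z → z ∈ Dom u ∨ u ∈ Dom z := by
    intro u hu z hz hadj hne
    have hQfilter : ∀ p q : V, q ∈ C → ∀ w : V,
        w ∈ (Q p).filter (fun w => ¬ G.Adj q w) ↔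
        (w ∈ S ∧ G.Adj p w ∧ ¬ G.Adj v w ∧ ¬ G.Adj q w) := by
      intro p q hq w
      rw [Finset.mem_filter, hQmem]
      constructor
      · rintro ⟨⟨w1, w2, w3, _⟩, w5⟩; exact ⟨w1, w2, w3, w5⟩
      · rintro ⟨w1, w2, w3, w4⟩
        refine ⟨⟨w1, w2, w3, ?_⟩, w4⟩
        rintro rfl
        exact w4 ((hCS q hq).2).symm
    have hk := key (by omega) hP5 hK S (a := u) (b := v) (c := z)
      (hCS u hu).2.symm (hCS z hz).2 hadj
    have e1 : S.filter (fun w => G.Adj u w ∧ ¬ G.Adj v w ∧ ¬ G.Adj z w) =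
        (Q u).filter (fun w => ¬ G.Adj z w) := by
      ext w
      rw [hQfilter u z hz, Finset.mem_filter]
    have e2 : S.filter (fun w => G.Adj z w ∧ ¬ G.Adj u w ∧ ¬ G.Adj v w) =
        (Q z).filter (fun w => ¬ G.Adj u w) := by
      ext w
      rw [hQfilter z u hu, Finset.mem_filter]
      tauto
    rcases hk with hk | hk
    · left
      rw [hDom, Finset.mem_filter]
      rw [e1] at hk
      exact ⟨hz, hk⟩
    · right
      rw [hDom, Finset.mem_filter]
      rw [e2] at hk
      exact ⟨hu, hk⟩
  -- counting
  have hlow : ∀ u ∈ C, ℓ ^ 2 ≤ (C.filter (fun z => z ≠ u ∧ ¬ G.Adj u z)).card := by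
    intro u hu
    have heq : C.filter (fun z => ¬ G.Adj u z) =
        insert u (C.filter (fun z => z ≠ u ∧ ¬ G.Adj u z)) := by
      ext z
      rw [Finset.mem_insert, Finset.mem_filter, Finset.mem_filter]
      constructor
      · rintro ⟨z1, z2⟩
        by_cases hzu : z = u
        · exact Or.inl hzu
        · exact Or.inr ⟨z1, hzu, z2⟩
      · rintro (rfl | ⟨z1, _, z3⟩)
        · exact ⟨hu, G.irrefl⟩
        · exact ⟨z1, z3⟩
    have hnm : u ∉ C.filter (fun z => z ≠ u ∧ ¬ G.Adj u z) := by
      simp [Finset.mem_filter]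
    have := hcon u hu
    rw [heq, Finset.card_insert_of_notMem hnm] at this
    omega
  have hsubUnion : ∀ u ∈ C, C.filter (fun z => z ≠ u ∧ ¬ G.Adj u z) ⊆
      Dom u ∪ C.filter (fun z => u ∈ Dom z) := by
    intro u hu z hz
    rw [Finset.mem_filter] at hz
    rw [Finset.mem_union]
    rcases claim3 u hu z hz.1 hz.2.2 (Ne.symm hz.2.1) with h | h
    · exact Or.inl h
    · exact Or.inr (Finset.mem_filter.2 ⟨hz.1, h⟩)
  have hswap : ∑ u ∈ C, (C.filter (fun z => u ∈ Dom z)).card = ∑ z ∈ C, (Dom z).card := by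
    calc ∑ u ∈ C, (C.filter (fun z => u ∈ Dom z)).card
        = ∑ u ∈ C, ∑ z ∈ C, if u ∈ Dom z then 1 else 0 := by
          apply Finset.sum_congr rfl; intro u _; exact Finset.card_filter _ _
      _ = ∑ z ∈ C, ∑ u ∈ C, if u ∈ Dom z then 1 else 0 := Finset.sum_comm
      _ = ∑ z ∈ C, (C.filter (fun u => u ∈ Dom z)).card := by
          apply Finset.sum_congr rfl; intro z _; exact (Finset.card_filter _ _).symm
      _ = ∑ z ∈ C, (Dom z).card := by
          apply Finset.sum_congr rfl; intro z _
          congr 1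
          rw [Finset.filter_mem_eq_inter, Finset.inter_eq_right.2 (hDomSub z)]
  have hupper : ∑ u ∈ C, (C.filter (fun z => z ≠ u ∧ ¬ G.Adj u z)).card ≤
      (ℓ - 1) * C.card + (ℓ - 1) * C.card := by
    calc ∑ u ∈ C, (C.filter (fun z => z ≠ u ∧ ¬ G.Adj u z)).card
        ≤ ∑ u ∈ C, ((Dom u).card + (C.filter (fun z => u ∈ Dom z)).card) :=
          Finset.sum_le_sum (fun u hu =>
            le_trans (Finset.card_le_card (hsubUnion u hu)) (Finset.card_union_le _ _))
      _ = ∑ u ∈ C, (Dom u).card + ∑ u ∈ C, (C.filter (fun z => u ∈ Dom z)).card :=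
          Finset.sum_add_distrib
      _ = ∑ u ∈ C, (Dom u).card + ∑ z ∈ C, (Dom z).card := by rw [hswap]
      _ ≤ (ℓ - 1) * C.card + (ℓ - 1) * C.card := by
          have hb : ∑ u ∈ C, (Dom u).card ≤ (ℓ - 1) * C.card := by
            calc ∑ u ∈ C, (Dom u).card ≤ ∑ _u ∈ C, (ℓ - 1) :=
                  Finset.sum_le_sum claim2
              _ = (ℓ - 1) * C.card := by rw [Finset.sum_const, smul_eq_mul, mul_comm]
          exact Nat.add_le_add hb hb
  have hlower : ℓ ^ 2 * C.card ≤
      ∑ u ∈ C, (C.filter (fun z => z ≠ u ∧ ¬ G.Adj u z)).card := by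
    calc ℓ ^ 2 * C.card = ∑ _u ∈ C, ℓ ^ 2 := by rw [Finset.sum_const, smul_eq_mul, mul_comm]
      _ ≤ ∑ u ∈ C, (C.filter (fun z => z ≠ u ∧ ¬ G.Adj u z)).card :=
          Finset.sum_le_sum hlow
  have hCpos : 1 ≤ C.card := Finset.card_pos.2 hCne
  have h2 : 2 * (ℓ - 1) + 1 ≤ ℓ ^ 2 := by
    obtain ⟨m, rfl⟩ : ∃ m, ℓ = m + 2 := ⟨ℓ - 2, by omega⟩
    have hms : (m + 2) - 1 = m + 1 := rfl
    rw [hms, pow_two]; nlinarith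
  have h3 : (2 * (ℓ - 1) + 1) * C.card ≤ ℓ ^ 2 * C.card := Nat.mul_le_mul_right _ h2
  have h4 : (2 * (ℓ - 1) + 1) * C.card = (ℓ - 1) * C.card + (ℓ - 1) * C.card + C.card := by
    ring
  linarith

theorem stmt5 {V : Type*} [Fintype V] [DecidableEq V]
    (G : SimpleGraph V) [DecidableRel G.Adj] (ℓ : ℕ) (hℓ : 2 ≤ ℓ)
    (hP5free : ¬ HasInducedCopy (SimpleGraph.pathGraph 5) G)
    (hK : ¬ ContainsKll G ℓ) :
    DegeneracyLE G ((ℓ - 1) * (ℓ + ℓ ^ 2 + ℓ ^ 2) + 1) := by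
  intro S hS
  by_contra hcon
  push_neg at hcon
  obtain ⟨v, hv, hvmin⟩ :=
    Finset.exists_min_image S (fun v => (S.filter (fun u => G.Adj v u)).card) hS
  have hd := hcon v hv
  have hbuild : ∀ i : ℕ, i ≤ ℓ - 1 → ∃ A C : Finset V, A.card = i + 1 ∧
      C ⊆ S.filter (fun w => G.Adj v w) ∧ (∀ a ∈ A, ∀ c ∈ C, G.Adj a c) ∧
      (S.filter (fun w => G.Adj v w)).card ≤ C.card + i * ℓ ^ 2 := by
    intro i
    induction i with
    | zero =>
      intro _
      refine ⟨{v}, S.filter (fun w => G.Adj v w), Finset.card_singleton v,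
        Finset.Subset.refl _, ?_, by omega⟩
      intro a ha c hc
      rw [Finset.mem_singleton] at ha
      subst ha
      exact (Finset.mem_filter.1 hc).2
    | succ n ih =>
      intro hn
      obtain ⟨A, C, hA, hCsub, hadj, hcard⟩ := ih (by omega)
      have hCne : C.Nonempty := by
        rw [← Finset.card_pos]
        have h1 : n * ℓ ^ 2 ≤ (ℓ - 1) * ℓ ^ 2 := Nat.mul_le_mul_right _ (by omega)
        have h2 : (ℓ - 1) * ℓ ^ 2 ≤ (ℓ - 1) * (ℓ + ℓ ^ 2 + ℓ ^ 2) :=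
          Nat.mul_le_mul_left _ (Nat.le_add_left _ _)
        linarith
      obtain ⟨u, hu, hustep⟩ := step_lemma hℓ hP5free hK S
        (fun u hu => hvmin u hu) hCsub hCne
      have huS : G.Adj v u := (Finset.mem_filter.1 (hCsub hu)).2
      have huA : u ∉ A := by
        intro hmem
        exact G.irrefl (hadj u hmem u hu)
      refine ⟨insert u A, C.filter (fun z => G.Adj u z), ?_, ?_, ?_, ?_⟩
      · rw [Finset.card_insert_of_notMem huA, hA]
      · exact Finset.Subset.trans (Finset.filter_subset _ _) hCsub
      · intro a ha c hc
        rw [Finset.mem_insert] at ha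
        rw [Finset.mem_filter] at hc
        rcases ha with rfl | ha
        · exact hc.2
        · exact hadj a ha c hc.1
      · have hsplit : (C.filter (fun z => G.Adj u z)).card +
            (C.filter (fun z => ¬ G.Adj u z)).card = C.card :=
          Finset.card_filter_add_card_filter_not _
        have : (n + 1) * ℓ ^ 2 = n * ℓ ^ 2 + ℓ ^ 2 := by ring
        omega
  obtain ⟨A, C, hA, hCsub, hadj, hcard⟩ := hbuild (ℓ - 1) le_rfl
  have hAcard : A.card = ℓ := by omega
  have hCcard : ℓ ≤ C.card := by
    have e1 : (ℓ - 1) * (ℓ + ℓ ^ 2 + ℓ ^ 2) = (ℓ - 1) * (ℓ + ℓ ^ 2) + (ℓ - 1) * ℓ ^ 2 :=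
      mul_add _ _ _
    have e2 : ℓ + ℓ ^ 2 ≤ (ℓ - 1) * (ℓ + ℓ ^ 2) := Nat.le_mul_of_pos_left _ (by omega)
    have e3 : ℓ ≤ ℓ + ℓ ^ 2 := Nat.le_add_right _ _
    linarith
  obtain ⟨B, hBsub, hBcard⟩ := Finset.exists_subset_card_eq hCcard
  apply hK
  refine ⟨A, B, ?_, hAcard, hBcard, fun a ha b hb => hadj a ha b (hBsub hb)⟩
  rw [Finset.disjoint_left]
  intro p hpA hpB
  exact G.irrefl (hadj p hpA p (hBsub hpB))
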